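/- Let λ_1 ≤ λ_2 ≤ ... ≤ λ_n be nonnegative reals and for 1 ≤ P ≤ n define f(P) = (1/C(n,P)) Σ_{k=P}^{n} λ_k C(k-1, P-1). Then g(P) = f(P)/P is monotonically decreasing in P, i.e., f(P+1)/(P+1) ≤ f(P)/P for all 1 ≤ P ≤ n-1. -/

import Mathlib

/-- for nondecreasing nonnegative `λ`,
`f P / P` is monotonically decreasing in `P`, where
`f P = (1/C(n,P)) Σ_{k=P}^n λ_k C(k-1,P-1)`. -/
theorem expected_max_over_P_decreasing (n : ℕ) (lam : ℕ → ℝ)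
    (hmono : ∀ i j, i ≤ j → lam i ≤ lam j) (hnonneg : ∀ i, 0 ≤ lam i)
    (f : ℕ → ℝ)
    (hf : ∀ P, f P = (1 / (n.choose P : ℝ)) *
      ∑ k ∈ Finset.Icc P n, lam k * ((k - 1).choose (P - 1) : ℝ))
    (P : ℕ) (hP1 : 1 ≤ P) (hPn : P ≤ n - 1) :
    f (P + 1) / (P + 1 : ℝ) ≤ f P / (P : ℝ) := by
  have hPn' : P + 1 ≤ n := by omega
  have hc1 : 0 < (n.choose P : ℝ) := by
    exact_mod_cast Nat.choose_pos (by omega)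
  have hc2 : 0 < (n.choose (P + 1) : ℝ) := by
    exact_mod_cast Nat.choose_pos hPn'
  have hPpos : 0 < (P : ℝ) := by exact_mod_cast hP1
  have hP1pos : 0 < ((P : ℝ) + 1) := by positivity
  set S1 := ∑ k ∈ Finset.Icc P n, lam k * ((k - 1).choose (P - 1) : ℝ) with hS1
  set S2 := ∑ k ∈ Finset.Icc (P + 1) n, lam k * ((k - 1).choose P : ℝ) with hS2
  have hfP : f P = (1 / (n.choose P : ℝ)) * S1 := hf P
  have hfP1 : f (P + 1) = (1 / (n.choose (P + 1) : ℝ)) * S2 := by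
    rw [hf]
    simp [hS2]
  -- key sum inequality : P * S2 ≤ (n - P) * S1
  have key : (P : ℝ) * S2 ≤ ((n - P : ℕ) : ℝ) * S1 := by
    have h1 : (P : ℝ) * S2 ≤ ((n - P : ℕ) : ℝ) *
        ∑ k ∈ Finset.Icc (P + 1) n, lam k * ((k - 1).choose (P - 1) : ℝ) := by
      rw [Finset.mul_sum, Finset.mul_sum]
      apply Finset.sum_le_sum
      intro k hk
      simp only [Finset.mem_Icc] at hk
      have hid : (k - 1).choose P * P = (k - 1).choose (P - 1) * (k - P) := by
        have h := Nat.choose_succ_right_eq (k - 1) (P - 1)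
        have hP : P - 1 + 1 = P := by omega
        rw [hP] at h
        have hkk : k - 1 - (P - 1) = k - P := by omega
        rw [hkk] at h
        exact h
      have hle : (k - 1).choose (P - 1) * (k - P) ≤ (k - 1).choose (P - 1) * (n - P) :=
        Nat.mul_le_mul_left _ (by omega)
      calc (P : ℝ) * (lam k * ((k - 1).choose P : ℝ))
          = lam k * (((k - 1).choose P * P : ℕ) : ℝ) := by push_cast; ring
        _ = lam k * (((k - 1).choose (P - 1) * (k - P) : ℕ) : ℝ) := by rw [hid]
        _ ≤ lam k * (((k - 1).choose (P - 1) * (n - P) : ℕ) : ℝ) := by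
            apply mul_le_mul_of_nonneg_left _ (hnonneg k)
            exact_mod_cast hle
        _ = ((n - P : ℕ) : ℝ) * (lam k * ((k - 1).choose (P - 1) : ℝ)) := by
            push_cast; ring
    have h2 : ∑ k ∈ Finset.Icc (P + 1) n, lam k * ((k - 1).choose (P - 1) : ℝ) ≤ S1 := by
      apply Finset.sum_le_sum_of_subset_of_nonneg
      · intro x hx
        simp only [Finset.mem_Icc] at *
        omega
      · intro i _ _
        have := hnonneg i
        positivity
    exact h1.trans (mul_le_mul_of_nonneg_left h2 (by positivity))
  -- binomial identity : (P+1) * C(n,P+1) = (n-P) * C(n,P)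
  have hbin : ((P : ℕ) + 1 : ℝ) * (n.choose (P + 1) : ℝ) = ((n - P : ℕ) : ℝ) * (n.choose P : ℝ) := by
    have h := congrArg (Nat.cast : ℕ → ℝ) (Nat.choose_succ_right_eq n P)
    push_cast at h
    linarith
  rw [hfP, hfP1, one_div, one_div, inv_mul_eq_div, inv_mul_eq_div, div_div, div_div,
    div_le_div_iff₀ (by positivity) (by positivity)]
  calc S2 * ((n.choose P : ℝ) * (P : ℝ))
      = ((P : ℝ) * S2) * (n.choose P : ℝ) := by ring
    _ ≤ (((n - P : ℕ) : ℝ) * S1) * (n.choose P : ℝ) :=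
        mul_le_mul_of_nonneg_right key (le_of_lt hc1)
    _ = S1 * (((n - P : ℕ) : ℝ) * (n.choose P : ℝ)) := by ring
    _ = S1 * ((n.choose (P + 1) : ℝ) * ((P : ℝ) + 1)) := by rw [← hbin]; ring
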